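/- Let G ⊊ ℝⁿ be a domain and let 0 < p < ∞. Then for all x, y ∈ G, j_G^p(x,y) ≤ δ_G^p(x,y), where in δ_G^p the boundary is taken in ℝ̄ⁿ (so it contains ∞ if G is unbounded). -/

import Mathlib

open OnePoint

noncomputable section

/-- Inverse hyperbolic cosine: arcosh t = log (t + √(t² − 1)). -/
def arcosh (t : ℝ) : ℝ := Real.log (t + Real.sqrt (t ^ 2 - 1))

/-- Euclidean n-space. -/
abbrev En (n : ℕ) : Type := EuclideanSpace ℝ (Fin n)

/-- The chordal (spherical) metric on the one-point compactification ℝ̄ⁿ of ℝⁿ. -/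
def chordal {n : ℕ} : OnePoint (En n) → OnePoint (En n) → ℝ
  | ∞, ∞ => 0
  | ∞, (y : En n) => 1 / Real.sqrt (1 + ‖y‖ ^ 2)
  | (x : En n), ∞ => 1 / Real.sqrt (1 + ‖x‖ ^ 2)
  | (x : En n), (y : En n) => ‖x - y‖ / (Real.sqrt (1 + ‖x‖ ^ 2) * Real.sqrt (1 + ‖y‖ ^ 2))

/-- The cross-ratio |a,b,c,d| = q(a,c)q(b,d)/(q(a,b)q(c,d)) in the chordal metric. -/
def crossRatio {n : ℕ} (a b c d : OnePoint (En n)) : ℝ :=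
  chordal a c * chordal b d / (chordal a b * chordal c d)

/-- The generalized hyperbolic metric ρ_G(x,y) = sup_{a,b ∈ ∂G} arcosh(1 + |a,x,b,y||a,y,b,x|/2). -/
def rho {n : ℕ} (G : Set (OnePoint (En n))) (x y : OnePoint (En n)) : ℝ :=
  sSup {r : ℝ | ∃ a ∈ frontier G, ∃ b ∈ frontier G,
    r = arcosh (1 + crossRatio a x b y * crossRatio a y b x / 2)}

/-- Seittenranta's metric δ_G(x,y) = sup_{a,b ∈ ∂G} log(1 + |a,x,b,y|). -/
def seittenranta {n : ℕ} (G : Set (OnePoint (En n))) (x y : OnePoint (En n)) : ℝ :=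
  sSup {r : ℝ | ∃ a ∈ frontier G, ∃ b ∈ frontier G,
    r = Real.log (1 + crossRatio a x b y)}

/-- The j-metric j_G(x,y) = log(1 + |x−y|/min(d(x,∂G), d(y,∂G))). -/
def jMetric {n : ℕ} (G : Set (En n)) (x y : En n) : ℝ :=
  Real.log (1 + ‖x - y‖ / min (Metric.infDist x (frontier G)) (Metric.infDist y (frontier G)))

/-- The metric δ_G^p(x,y) = sup_{a,b ∈ ∂G} log(1 + (|x,a,y,b|^p + |x,b,y,a|^p)^(1/p)). -/
def deltaP {n : ℕ} (p : ℝ) (G : Set (OnePoint (En n))) (x y : OnePoint (En n)) : ℝ :=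
  sSup {r : ℝ | ∃ a ∈ frontier G, ∃ b ∈ frontier G,
    r = Real.log (1 + (crossRatio x a y b ^ p + crossRatio x b y a ^ p) ^ (1 / p))}

/-- The metric j_G^p(x,y) = sup_{a ∈ ∂G} log(1 + (|x−y|^p/|x−a|^p + |x−y|^p/|y−a|^p)^(1/p)). -/
def jP {n : ℕ} (p : ℝ) (G : Set (En n)) (x y : En n) : ℝ :=
  sSup {r : ℝ | ∃ a ∈ frontier G,
    r = Real.log (1 + (‖x - y‖ ^ p / ‖x - a‖ ^ p + ‖x - y‖ ^ p / ‖y - a‖ ^ p) ^ (1 / p))}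

/-! ### Auxiliary lemmas -/

section Aux

variable {n : ℕ}

lemma sqrt_one_add_sq_pos (t : ℝ) : 0 < Real.sqrt (1 + t ^ 2) := by
  apply Real.sqrt_pos.2; positivity

lemma sqrt_one_add_sq_le (t : ℝ) (ht : 0 ≤ t) : Real.sqrt (1 + t ^ 2) ≤ 1 + t := by
  have h := Real.sqrt_le_sqrt (show 1 + t ^ 2 ≤ (1 + t) ^ 2 by nlinarith)
  rwa [Real.sqrt_sq (by positivity)] at h

@[simp] lemma chordal_coe_coe (x y : En n) :
    chordal (x : OnePoint (En n)) (y : OnePoint (En n)) =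
      ‖x - y‖ / (Real.sqrt (1 + ‖x‖ ^ 2) * Real.sqrt (1 + ‖y‖ ^ 2)) := rfl

@[simp] lemma chordal_coe_infty (x : En n) :
    chordal (x : OnePoint (En n)) ∞ = 1 / Real.sqrt (1 + ‖x‖ ^ 2) := rfl

@[simp] lemma chordal_infty_coe (y : En n) :
    chordal (∞ : OnePoint (En n)) (y : OnePoint (En n)) = 1 / Real.sqrt (1 + ‖y‖ ^ 2) := rfl

@[simp] lemma chordal_infty_infty :
    chordal (∞ : OnePoint (En n)) ∞ = 0 := rfl

lemma chordal_nonneg (u v : OnePoint (En n)) : 0 ≤ chordal u v := by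
  cases u with
  | infty =>
    cases v with
    | infty => rw [chordal_infty_infty]
    | coe y => rw [chordal_infty_coe]; positivity
  | coe x =>
    cases v with
    | infty => rw [chordal_coe_infty]; positivity
    | coe y => rw [chordal_coe_coe]; positivity

lemma chordal_le_one (u v : OnePoint (En n)) : chordal u v ≤ 1 := by
  have key : ∀ w : En n, 0 < Real.sqrt (1 + ‖w‖ ^ 2) := fun w => sqrt_one_add_sq_pos _
  cases u with
  | infty =>
    cases v with
    | infty => rw [chordal_infty_infty]; norm_num
    | coe y =>
      rw [chordal_infty_coe, div_le_one (key y)]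
      have := Real.sqrt_le_sqrt (show (1:ℝ) ≤ 1 + ‖y‖ ^ 2 from le_add_of_nonneg_right (by positivity))
      simpa using this
  | coe x =>
    cases v with
    | infty =>
      rw [chordal_coe_infty, div_le_one (key x)]
      have := Real.sqrt_le_sqrt (show (1:ℝ) ≤ 1 + ‖x‖ ^ 2 from le_add_of_nonneg_right (by positivity))
      simpa using this
    | coe y =>
      rw [chordal_coe_coe, div_le_one (by positivity)]
      have h1 : ‖x - y‖ ≤ ‖x‖ + ‖y‖ := norm_sub_le x y
      have h2 : ‖x‖ + ‖y‖ ≤ Real.sqrt (1 + ‖x‖ ^ 2) * Real.sqrt (1 + ‖y‖ ^ 2) := by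
        rw [← Real.sqrt_mul (by positivity)]
        have h3 : (‖x‖ + ‖y‖) = Real.sqrt ((‖x‖ + ‖y‖) ^ 2) :=
          (Real.sqrt_sq (by positivity)).symm
        rw [h3]
        apply Real.sqrt_le_sqrt
        nlinarith [sq_nonneg (‖x‖ * ‖y‖ - 1), norm_nonneg x, norm_nonneg y]
      linarith

lemma crossRatio_nonneg (a b c d : OnePoint (En n)) : 0 ≤ crossRatio a b c d :=
  div_nonneg (mul_nonneg (chordal_nonneg _ _) (chordal_nonneg _ _))
    (mul_nonneg (chordal_nonneg _ _) (chordal_nonneg _ _))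

lemma crossRatio_coe_coe {x a y b : En n} (hxa : x ≠ a) (hyb : y ≠ b) :
    crossRatio (x : OnePoint (En n)) (a : OnePoint (En n)) (y : OnePoint (En n))
      (b : OnePoint (En n)) = ‖x - y‖ * ‖a - b‖ / (‖x - a‖ * ‖y - b‖) := by
  have sx := sqrt_one_add_sq_pos ‖x‖
  have sy := sqrt_one_add_sq_pos ‖y‖
  have sa := sqrt_one_add_sq_pos ‖a‖
  have sb := sqrt_one_add_sq_pos ‖b‖
  have hxa' : ‖x - a‖ ≠ 0 := by simpa [sub_eq_zero] using hxa
  have hyb' : ‖y - b‖ ≠ 0 := by simpa [sub_eq_zero] using hyb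
  unfold crossRatio
  rw [chordal_coe_coe, chordal_coe_coe, chordal_coe_coe, chordal_coe_coe]
  field_simp

lemma crossRatio_coe_infty {x a y : En n} (hxa : x ≠ a) :
    crossRatio (x : OnePoint (En n)) (a : OnePoint (En n)) (y : OnePoint (En n)) ∞ =
      ‖x - y‖ / ‖x - a‖ := by
  have sx := sqrt_one_add_sq_pos ‖x‖
  have sy := sqrt_one_add_sq_pos ‖y‖
  have sa := sqrt_one_add_sq_pos ‖a‖
  have hxa' : ‖x - a‖ ≠ 0 := by simpa [sub_eq_zero] using hxa
  unfold crossRatio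
  rw [chordal_coe_coe, chordal_coe_infty, chordal_coe_coe, chordal_coe_infty]
  field_simp

lemma crossRatio_infty_coe {x y a : En n} (hya : y ≠ a) :
    crossRatio (x : OnePoint (En n)) ∞ (y : OnePoint (En n)) (a : OnePoint (En n)) =
      ‖x - y‖ / ‖y - a‖ := by
  have sx := sqrt_one_add_sq_pos ‖x‖
  have sy := sqrt_one_add_sq_pos ‖y‖
  have sa := sqrt_one_add_sq_pos ‖a‖
  have hya' : ‖y - a‖ ≠ 0 := by simpa [sub_eq_zero] using hya
  unfold crossRatio
  rw [chordal_coe_coe, chordal_infty_coe, chordal_coe_infty, chordal_coe_coe]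
  field_simp

lemma coe_mem_frontier {G : Set (En n)} (hopen : IsOpen G) {a : En n} (ha : a ∈ frontier G) :
    (a : OnePoint (En n)) ∈ frontier (((↑) : En n → OnePoint (En n)) '' G) := by
  have hGo : IsOpen (((↑) : En n → OnePoint (En n)) '' G) := OnePoint.isOpen_image_coe.2 hopen
  rw [hGo.frontier_eq]
  rw [hopen.frontier_eq] at ha
  refine ⟨image_closure_subset_closure_image OnePoint.continuous_coe ⟨a, ha.1, rfl⟩, ?_⟩
  rintro ⟨g, hg, hge⟩
  exact ha.2 (OnePoint.coe_injective hge ▸ hg)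

lemma mem_frontier_of_coe_mem {G : Set (En n)} (hopen : IsOpen G) {a : En n}
    (ha : (a : OnePoint (En n)) ∈ frontier (((↑) : En n → OnePoint (En n)) '' G)) :
    a ∈ frontier G := by
  have hGo : IsOpen (((↑) : En n → OnePoint (En n)) '' G) := OnePoint.isOpen_image_coe.2 hopen
  rw [hGo.frontier_eq] at ha
  rw [hopen.frontier_eq]
  refine ⟨?_, fun hG => ha.2 ⟨a, hG, rfl⟩⟩
  rw [mem_closure_iff]
  intro U hU haU
  obtain ⟨e, heU, g, hgG, hge⟩ := mem_closure_iff.1 ha.1 (((↑) : En n → OnePoint (En n)) '' U)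
    (OnePoint.isOpenMap_coe U hU) ⟨a, haU, rfl⟩
  obtain ⟨u, huU, hue⟩ := heU
  have : u = g := OnePoint.coe_injective (hue.trans hge.symm)
  exact ⟨u, huU, this ▸ hgG⟩

lemma infty_mem_frontier {G : Set (En n)} (hopen : IsOpen G)
    (hub : ¬ Bornology.IsBounded G) :
    (∞ : OnePoint (En n)) ∈ frontier (((↑) : En n → OnePoint (En n)) '' G) := by
  have hGo : IsOpen (((↑) : En n → OnePoint (En n)) '' G) := OnePoint.isOpen_image_coe.2 hopen
  rw [hGo.frontier_eq]
  refine ⟨?_, OnePoint.infty_notMem_image_coe⟩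
  rw [mem_closure_iff]
  intro O hO hIO
  obtain ⟨-, h2⟩ := (OnePoint.isOpen_iff_of_mem hIO).1 hO
  have hbd : Bornology.IsBounded ((((↑) : En n → OnePoint (En n)) ⁻¹' O)ᶜ) := h2.isBounded
  have hns : ¬ G ⊆ (((↑) : En n → OnePoint (En n)) ⁻¹' O)ᶜ := fun hsub => hub (hbd.subset hsub)
  obtain ⟨g, hgG, hgO⟩ := Set.not_subset.1 hns
  exact ⟨(g : OnePoint (En n)), not_not.1 hgO, g, hgG, rfl⟩

lemma exists_ray_frontier {G : Set (En n)} (hopen : IsOpen G)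
    (hbdd : Bornology.IsBounded G) {a v : En n} (ha : a ∈ frontier G) (hv : v ∈ G) :
    ∃ s : ℝ, 1 < s ∧ a + s • (v - a) ∈ frontier G := by
  have hvnG : a ∉ G := by rw [hopen.frontier_eq] at ha; exact ha.2
  have hva : v ≠ a := fun h => hvnG (h ▸ hv)
  have hnorm : (0:ℝ) < ‖v - a‖ := by simpa [sub_eq_zero, norm_pos_iff] using hva
  set f : ℝ → En n := fun t => a + t • (v - a) with hf
  have hcont : Continuous f := by
    apply continuous_const.add
    exact continuous_id.smul continuous_const
  set T : Set ℝ := Set.Ici (1:ℝ) ∩ f ⁻¹' (closure G) with hT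
  have hT1 : (1:ℝ) ∈ T := by
    refine ⟨Set.mem_Ici.2 le_rfl, ?_⟩
    show f 1 ∈ closure G
    have : f 1 = v := by simp [hf]
    rw [this]
    exact subset_closure hv
  obtain ⟨R, hR⟩ := (hbdd.closure).subset_closedBall a
  have hTbdd : BddAbove T := by
    refine ⟨R / ‖v - a‖, fun t ht => ?_⟩
    have htc : f t ∈ Metric.closedBall a R := hR ht.2
    rw [Metric.mem_closedBall, dist_eq_norm] at htc
    have : ‖f t - a‖ = |t| * ‖v - a‖ := by
      simp only [hf, add_sub_cancel_left, norm_smul, Real.norm_eq_abs]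
    rw [this] at htc
    have ht1 : (1:ℝ) ≤ t := ht.1
    rw [le_div_iff₀ hnorm]
    calc t * ‖v - a‖ = |t| * ‖v - a‖ := by rw [abs_of_pos (by linarith)]
      _ ≤ R := htc
  have hTclosed : IsClosed T := isClosed_Ici.inter (isClosed_closure.preimage hcont)
  set s := sSup T with hs
  have hsT : s ∈ T := hTclosed.csSup_mem ⟨1, hT1⟩ hTbdd
  have hs1 : 1 ≤ s := le_csSup hTbdd hT1
  have hbnG : f s ∉ G := by
    intro hbG
    obtain ⟨ε, hε, hball⟩ := Metric.isOpen_iff.1 hopen (f s) hbG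
    have hq : (0:ℝ) < ε / (2 * ‖v - a‖) := by positivity
    have ht's : s < s + ε / (2 * ‖v - a‖) := by linarith
    have hmem : f (s + ε / (2 * ‖v - a‖)) ∈ Metric.ball (f s) ε := by
      rw [Metric.mem_ball, dist_eq_norm]
      have h1 : f (s + ε / (2 * ‖v - a‖)) - f s = (ε / (2 * ‖v - a‖)) • (v - a) := by
        simp only [hf]; module
      rw [h1, norm_smul, Real.norm_eq_abs, abs_of_pos hq]
      have h2 : ε / (2 * ‖v - a‖) * ‖v - a‖ = ε / 2 := by
        field_simp
      rw [h2]; linarith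
    have hmemT : s + ε / (2 * ‖v - a‖) ∈ T :=
      ⟨Set.mem_Ici.2 (by linarith), subset_closure (hball hmem)⟩
    exact absurd (le_csSup hTbdd hmemT) (not_le.2 ht's)
  have hsne : s ≠ 1 := by
    intro h
    apply hbnG
    simp only [hf, h, one_smul, add_sub_cancel]
    exact hv
  refine ⟨s, lt_of_le_of_ne hs1 (Ne.symm hsne), ?_⟩
  rw [hopen.frontier_eq]
  exact ⟨hsT.2, hbnG⟩

lemma key_ineq {p d1 d2 s : ℝ} (hp : 0 < p) (h1 : 0 < d1) (h12 : d1 ≤ d2) (hs : 1 < s) :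
    1 / d1 ^ p + 1 / d2 ^ p ≤
      (s / (s - 1)) ^ p / d1 ^ p + (s * d2 / (d1 + s * d2)) ^ p / d2 ^ p := by
  have h2 : 0 < d2 := lt_of_lt_of_le h1 h12
  have hs0 : 0 < s := by linarith
  have hs1 : 0 < s - 1 := by linarith
  have hden : 0 < d1 + s * d2 := by positivity
  set A := (s / (s - 1)) ^ p with hA
  set B := (s * d2 / (d1 + s * d2)) ^ p with hB
  set Bt := (s / (1 + s)) ^ p with hBt
  have hBtpos : 0 < Bt := Real.rpow_pos_of_pos (by positivity) p
  have hBt_le_B : Bt ≤ B := by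
    apply Real.rpow_le_rpow (by positivity) ?_ hp.le
    rw [div_le_div_iff₀ (by positivity) hden]
    nlinarith
  have hB_le_one : B ≤ 1 :=
    Real.rpow_le_one (by positivity) (by rw [div_le_one hden]; nlinarith) hp.le
  have hBt_le_one : Bt ≤ 1 := le_trans hBt_le_B hB_le_one
  have hABt : 1 ≤ A * Bt := by
    rw [hA, hBt, ← Real.mul_rpow (by positivity) (by positivity)]
    apply Real.one_le_rpow ?_ hp.le
    rw [div_mul_div_comm, le_div_iff₀ (by positivity)]
    nlinarith
  have hA1 : 1 - Bt ≤ A - 1 := by nlinarith [sq_nonneg (Bt - 1)]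
  have hD1 : 0 < d1 ^ p := Real.rpow_pos_of_pos h1 p
  have hD2 : 0 < d2 ^ p := Real.rpow_pos_of_pos h2 p
  have hD12 : d1 ^ p ≤ d2 ^ p := Real.rpow_le_rpow h1.le h12 hp.le
  have h3 : (1 - B) / d2 ^ p ≤ (A - 1) / d1 ^ p :=
    div_le_div₀ (by linarith) (by linarith) hD1 hD12
  rw [sub_div, sub_div] at h3
  have e1 : (1:ℝ) - B ≥ 0 := by linarith
  linarith [div_le_div_of_nonneg_left e1 hD1 hD12]

lemma helper {G : Set (En n)} (hopen : IsOpen G) (hbdd : Bornology.IsBounded G)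
    {a u v : En n} (ha : a ∈ frontier G) (hu : u ∈ G) (hv : v ∈ G) {p : ℝ} (hp : 0 < p)
    (huv : ‖u - a‖ ≤ ‖v - a‖) :
    ∃ b ∈ frontier G,
      ‖u - v‖ ^ p / ‖u - a‖ ^ p + ‖u - v‖ ^ p / ‖v - a‖ ^ p ≤
      (‖u - v‖ * ‖a - b‖ / (‖u - a‖ * ‖v - b‖)) ^ p +
      (‖u - v‖ * ‖a - b‖ / (‖u - b‖ * ‖v - a‖)) ^ p := by
  have hanG : a ∉ G := by rw [hopen.frontier_eq] at ha; exact ha.2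
  obtain ⟨s, hs, hbf⟩ := exists_ray_frontier hopen hbdd ha hv
  set b := a + s • (v - a) with hb
  have hbnG : b ∉ G := by rw [hopen.frontier_eq] at hbf; exact hbf.2
  refine ⟨b, hbf, ?_⟩
  have hua : (0:ℝ) < ‖u - a‖ := by
    simp only [norm_pos_iff, sub_ne_zero]; exact fun h => hanG (h ▸ hu)
  have hva : (0:ℝ) < ‖v - a‖ := by
    simp only [norm_pos_iff, sub_ne_zero]; exact fun h => hanG (h ▸ hv)
  have hub : (0:ℝ) < ‖u - b‖ := by
    simp only [norm_pos_iff, sub_ne_zero]; exact fun h => hbnG (h ▸ hu)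
  have hs0 : (0:ℝ) < s := by linarith
  have hab : ‖a - b‖ = s * ‖v - a‖ := by
    have : a - b = (-s) • (v - a) := by rw [hb]; module
    rw [this, norm_smul, Real.norm_eq_abs, abs_neg, abs_of_pos hs0]
  have hvb : ‖v - b‖ = (s - 1) * ‖v - a‖ := by
    have : v - b = (-(s-1)) • (v - a) := by rw [hb]; module
    rw [this, norm_smul, Real.norm_eq_abs, abs_neg, abs_of_pos (by linarith)]
  have hub_le : ‖u - b‖ ≤ ‖u - a‖ + s * ‖v - a‖ := by
    have h := dist_triangle u a b
    rw [dist_eq_norm, dist_eq_norm, dist_eq_norm] at h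
    rw [← hab]; exact h
  set N := ‖u - v‖ with hN
  have hN0 : 0 ≤ N := norm_nonneg _
  have hkey := key_ineq hp hua huv hs
  have hs1pos : (0:ℝ) < s - 1 := by linarith
  have hden_pos : (0:ℝ) < ‖u - a‖ + s * ‖v - a‖ := by positivity
  have hZ0 : (0:ℝ) ≤ s * ‖v - a‖ / (‖u - a‖ + s * ‖v - a‖) :=
    div_nonneg (mul_nonneg hs0.le hva.le) hden_pos.le
  -- rewrite first RHS term
  have e1 : (N * ‖a - b‖ / (‖u - a‖ * ‖v - b‖)) ^ p = N ^ p * ((s / (s - 1)) ^ p / ‖u - a‖ ^ p) := by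
    rw [hab, hvb]
    rw [show N * (s * ‖v - a‖) / (‖u - a‖ * ((s - 1) * ‖v - a‖))
        = N * (s / (s - 1)) / ‖u - a‖ by
      rw [div_eq_div_iff (by positivity) hua.ne']; field_simp]
    rw [Real.div_rpow (mul_nonneg hN0 (div_nonneg hs0.le hs1pos.le)) hua.le,
      Real.mul_rpow hN0 (div_nonneg hs0.le hs1pos.le)]
    ring
  have e2 : N ^ p * ((s * ‖v - a‖ / (‖u - a‖ + s * ‖v - a‖)) ^ p / ‖v - a‖ ^ p) ≤
      (N * ‖a - b‖ / (‖u - b‖ * ‖v - a‖)) ^ p := by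
    rw [hab]
    have base_eq : N * (s * ‖v - a‖ / (‖u - a‖ + s * ‖v - a‖) / ‖v - a‖)
        = N * s / (‖u - a‖ + s * ‖v - a‖) := by
      field_simp
    have base_eq2 : N * (s * ‖v - a‖) / (‖u - b‖ * ‖v - a‖) = N * s / ‖u - b‖ := by
      field_simp
    rw [← Real.div_rpow hZ0 hva.le, ← Real.mul_rpow hN0 (div_nonneg hZ0 hva.le)]
    rw [base_eq, base_eq2]
    apply Real.rpow_le_rpow (div_nonneg (mul_nonneg hN0 hs0.le) hden_pos.le) ?_ hp.le
    exact div_le_div_of_nonneg_left (mul_nonneg hN0 hs0.le) hub hub_le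
  calc N ^ p / ‖u - a‖ ^ p + N ^ p / ‖v - a‖ ^ p
      = N ^ p * (1 / ‖u - a‖ ^ p) + N ^ p * (1 / ‖v - a‖ ^ p) := by ring
    _ ≤ N ^ p * ((s / (s - 1)) ^ p / ‖u - a‖ ^ p)
        + N ^ p * ((s * ‖v - a‖ / (‖u - a‖ + s * ‖v - a‖)) ^ p / ‖v - a‖ ^ p) := by
        have hNp : 0 ≤ N ^ p := Real.rpow_nonneg hN0 p
        have h := mul_le_mul_of_nonneg_left hkey hNp
        rw [mul_add, mul_add] at h
        exact h
    _ ≤ (N * ‖a - b‖ / (‖u - a‖ * ‖v - b‖)) ^ p + (N * ‖a - b‖ / (‖u - b‖ * ‖v - a‖)) ^ p := by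
        rw [e1]
        exact add_le_add_right e2 _

lemma chordal_frontier_lower {G : Set (En n)} (hopen : IsOpen G) {z : En n} (hz : z ∈ G)
    (hfne : (frontier G).Nonempty) :
    ∃ c > 0, ∀ e ∈ frontier (((↑) : En n → OnePoint (En n)) '' G),
      c ≤ chordal (z : OnePoint (En n)) e := by
  have hznf : z ∉ frontier G := by rw [hopen.frontier_eq]; exact fun h => h.2 hz
  have hd : 0 < Metric.infDist z (frontier G) :=
    (isClosed_frontier.notMem_iff_infDist_pos hfne).1 hznf
  set d := Metric.infDist z (frontier G) with hdd
  have hsz : 0 < Real.sqrt (1 + ‖z‖ ^ 2) := sqrt_one_add_sq_pos _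
  refine ⟨d / (Real.sqrt (1 + ‖z‖ ^ 2) * (1 + ‖z‖ + d)), by positivity, ?_⟩
  intro e he
  cases e with
  | infty =>
    rw [chordal_coe_infty]
    rw [div_le_div_iff₀ (by positivity) hsz]
    nlinarith [norm_nonneg z]
  | coe w =>
    have hw : w ∈ frontier G := mem_frontier_of_coe_mem hopen he
    have hdist : d ≤ ‖z - w‖ := by
      have h : Metric.infDist z (frontier G) ≤ dist z w := Metric.infDist_le_dist_of_mem hw
      rwa [dist_eq_norm] at h
    rw [chordal_coe_coe]
    have hsw : 0 < Real.sqrt (1 + ‖w‖ ^ 2) := sqrt_one_add_sq_pos _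
    have h1 : Real.sqrt (1 + ‖w‖ ^ 2) ≤ 1 + ‖z‖ + ‖z - w‖ := by
      have ha := sqrt_one_add_sq_le ‖w‖ (norm_nonneg w)
      have h2 : ‖w‖ ≤ ‖z‖ + ‖z - w‖ := by
        have := norm_sub_norm_le w z
        have h3 : ‖w - z‖ = ‖z - w‖ := norm_sub_rev w z
        linarith
      linarith
    rw [div_le_div_iff₀ (by positivity) (by positivity)]
    have hzw0 : 0 < ‖z - w‖ := lt_of_lt_of_le hd hdist
    have step : d * Real.sqrt (1 + ‖w‖ ^ 2) ≤ ‖z - w‖ * (1 + ‖z‖ + d) := by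
      calc d * Real.sqrt (1 + ‖w‖ ^ 2) ≤ d * (1 + ‖z‖ + ‖z - w‖) := by
            apply mul_le_mul_of_nonneg_left h1 hd.le
        _ = d * (1 + ‖z‖) + d * ‖z - w‖ := by ring
        _ ≤ ‖z - w‖ * (1 + ‖z‖) + ‖z - w‖ * d := by
            have : d * (1 + ‖z‖) ≤ ‖z - w‖ * (1 + ‖z‖) := by
              apply mul_le_mul_of_nonneg_right hdist (by positivity)
            linarith [this]
        _ = ‖z - w‖ * (1 + ‖z‖ + d) := by ring
    calc d * (Real.sqrt (1 + ‖z‖ ^ 2) * Real.sqrt (1 + ‖w‖ ^ 2))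
        = Real.sqrt (1 + ‖z‖ ^ 2) * (d * Real.sqrt (1 + ‖w‖ ^ 2)) := by ring
      _ ≤ Real.sqrt (1 + ‖z‖ ^ 2) * (‖z - w‖ * (1 + ‖z‖ + d)) := by
          apply mul_le_mul_of_nonneg_left step hsz.le
      _ = ‖z - w‖ * (Real.sqrt (1 + ‖z‖ ^ 2) * (1 + ‖z‖ + d)) := by ring

end Aux

/-- j_G^p ≤ δ_G^p for 0 < p < ∞ and a proper subdomain G of ℝⁿ, where in δ_G^p the boundary
is taken in ℝ̄ⁿ = ℝⁿ ∪ {∞}. -/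
theorem jP_le_deltaP (n : ℕ) (hn : 2 ≤ n) (G : Set (En n))
    (hopen : IsOpen G) (hconn : IsConnected G) (hne : G ≠ Set.univ)
    (p : ℝ) (hp : 0 < p)
    (x y : En n) (hx : x ∈ G) (hy : y ∈ G) :
    jP p G x y ≤
      deltaP p (((↑) : En n → OnePoint (En n)) '' G) (x : OnePoint (En n)) (y : OnePoint (En n)) := by
  classical
  haveI : PreconnectedSpace (En n) :=
    ⟨(convex_univ : Convex ℝ (Set.univ : Set (En n))).isPreconnected⟩
  have hGne : G.Nonempty := ⟨x, hx⟩
  have hfne : (frontier G).Nonempty := nonempty_frontier_iff.2 ⟨hGne, hne⟩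
  obtain ⟨a₀, ha₀⟩ := hfne
  obtain ⟨cx, hcx0, hcx⟩ := chordal_frontier_lower hopen hx ⟨a₀, ha₀⟩
  obtain ⟨cy, hcy0, hcy⟩ := chordal_frontier_lower hopen hy ⟨a₀, ha₀⟩
  set F := frontier (((↑) : En n → OnePoint (En n)) '' G) with hF
  set S : Set ℝ := {r : ℝ | ∃ a ∈ F, ∃ b ∈ F,
    r = Real.log (1 + (crossRatio (x : OnePoint (En n)) a (y : OnePoint (En n)) b ^ p
      + crossRatio (x : OnePoint (En n)) b (y : OnePoint (En n)) a ^ p) ^ (1 / p))} with hS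
  have hdelta : deltaP p (((↑) : En n → OnePoint (En n)) '' G) (x : OnePoint (En n))
      (y : OnePoint (En n)) = sSup S := rfl
  set M := 1 / (cx * cy) with hM
  have hM0 : 0 ≤ M := by positivity
  have hcrM : ∀ a ∈ F, ∀ b ∈ F,
      crossRatio (x : OnePoint (En n)) a (y : OnePoint (En n)) b ≤ M := by
    intro a ha b hb
    unfold crossRatio
    apply div_le_div₀ (by norm_num)
    · calc chordal (x : OnePoint (En n)) (y : OnePoint (En n)) * chordal a b ≤ 1 * 1 := by
            apply mul_le_mul (chordal_le_one _ _) (chordal_le_one _ _)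
              (chordal_nonneg _ _) (by norm_num)
        _ = 1 := by norm_num
    · positivity
    · exact mul_le_mul (hcx a ha) (hcy b hb) hcy0.le (chordal_nonneg _ _)
  have hSbdd : BddAbove S := by
    refine ⟨Real.log (1 + (M ^ p + M ^ p) ^ (1 / p)), ?_⟩
    rintro r ⟨a, ha, b, hb, rfl⟩
    have h1 : crossRatio (x : OnePoint (En n)) a (y : OnePoint (En n)) b ≤ M := hcrM a ha b hb
    have h2 : crossRatio (x : OnePoint (En n)) b (y : OnePoint (En n)) a ≤ M := hcrM b hb a ha
    have hc1 := Real.rpow_nonneg (crossRatio_nonneg (x : OnePoint (En n)) a (y : OnePoint (En n)) b) p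
    have hc2 := Real.rpow_nonneg (crossRatio_nonneg (x : OnePoint (En n)) b (y : OnePoint (En n)) a) p
    have harg : (0:ℝ) ≤ (crossRatio (x : OnePoint (En n)) a (y : OnePoint (En n)) b ^ p
        + crossRatio (x : OnePoint (En n)) b (y : OnePoint (En n)) a ^ p) ^ (1 / p) :=
      Real.rpow_nonneg (by linarith) _
    apply Real.log_le_log (by linarith)
    apply add_le_add_right
    apply Real.rpow_le_rpow (by positivity) ?_ (by positivity)
    apply add_le_add
    · exact Real.rpow_le_rpow (crossRatio_nonneg _ _ _ _) h1 hp.le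
    · exact Real.rpow_le_rpow (crossRatio_nonneg _ _ _ _) h2 hp.le
  have hS0 : ∀ r ∈ S, (0:ℝ) ≤ r := by
    rintro r ⟨a, ha, b, hb, rfl⟩
    apply Real.log_nonneg
    have : (0:ℝ) ≤ (crossRatio (x : OnePoint (En n)) a (y : OnePoint (En n)) b ^ p
        + crossRatio (x : OnePoint (En n)) b (y : OnePoint (En n)) a ^ p) ^ (1 / p) := by
      apply Real.rpow_nonneg
      have := Real.rpow_nonneg (crossRatio_nonneg (x : OnePoint (En n)) a (y : OnePoint (En n)) b) p
      have := Real.rpow_nonneg (crossRatio_nonneg (x : OnePoint (En n)) b (y : OnePoint (En n)) a) p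
      linarith
    linarith
  have hSne : S.Nonempty := by
    refine ⟨_, (a₀ : OnePoint (En n)), coe_mem_frontier hopen ha₀,
      (a₀ : OnePoint (En n)), coe_mem_frontier hopen ha₀, rfl⟩
  have hδ0 : (0:ℝ) ≤ sSup S := by
    obtain ⟨r, hr⟩ := hSne
    exact le_trans (hS0 r hr) (le_csSup hSbdd hr)
  rw [hdelta, jP]
  apply Real.sSup_le ?_ hδ0
  rintro r ⟨a, ha, rfl⟩
  have hanG : a ∉ G := by rw [hopen.frontier_eq] at ha; exact ha.2
  have hax : x ≠ a := fun h => hanG (h ▸ hx)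
  have hay : y ≠ a := fun h => hanG (h ▸ hy)
  have hxa0 : (0:ℝ) < ‖x - a‖ := by simpa [sub_eq_zero, norm_pos_iff] using hax
  have hya0 : (0:ℝ) < ‖y - a‖ := by simpa [sub_eq_zero, norm_pos_iff] using hay
  by_cases hxy : x = y
  · simp only [hxy, sub_self, norm_zero, Real.zero_rpow hp.ne', zero_div, add_zero,
      Real.zero_rpow (one_div_ne_zero hp.ne'), Real.log_one]
    exact hδ0
  by_cases hbdd : Bornology.IsBounded G
  · -- bounded case: ray construction
    rcases le_total ‖x - a‖ ‖y - a‖ with hle | hle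
    · obtain ⟨b, hb, hineq⟩ := helper hopen hbdd ha hx hy hp hle
      have hbnG : b ∉ G := by rw [hopen.frontier_eq] at hb; exact hb.2
      have hxb : x ≠ b := fun h => hbnG (h ▸ hx)
      have hyb : y ≠ b := fun h => hbnG (h ▸ hy)
      have hmem : Real.log (1 + (crossRatio (x : OnePoint (En n)) (a : OnePoint (En n))
          (y : OnePoint (En n)) (b : OnePoint (En n)) ^ p
          + crossRatio (x : OnePoint (En n)) (b : OnePoint (En n)) (y : OnePoint (En n))
          (a : OnePoint (En n)) ^ p) ^ (1 / p)) ∈ S :=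
        ⟨(a : OnePoint (En n)), coe_mem_frontier hopen ha,
         (b : OnePoint (En n)), coe_mem_frontier hopen hb, rfl⟩
      refine le_trans ?_ (le_csSup hSbdd hmem)
      apply Real.log_le_log (by positivity)
      apply add_le_add_right
      apply Real.rpow_le_rpow (by positivity) ?_ (by positivity)
      rw [crossRatio_coe_coe hax hyb, crossRatio_coe_coe hxb hay, norm_sub_rev b a]
      exact hineq
    · obtain ⟨b, hb, hineq⟩ := helper hopen hbdd ha hy hx hp hle
      have hbnG : b ∉ G := by rw [hopen.frontier_eq] at hb; exact hb.2
      have hxb : x ≠ b := fun h => hbnG (h ▸ hx)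
      have hyb : y ≠ b := fun h => hbnG (h ▸ hy)
      have hmem : Real.log (1 + (crossRatio (x : OnePoint (En n)) (a : OnePoint (En n))
          (y : OnePoint (En n)) (b : OnePoint (En n)) ^ p
          + crossRatio (x : OnePoint (En n)) (b : OnePoint (En n)) (y : OnePoint (En n))
          (a : OnePoint (En n)) ^ p) ^ (1 / p)) ∈ S :=
        ⟨(a : OnePoint (En n)), coe_mem_frontier hopen ha,
         (b : OnePoint (En n)), coe_mem_frontier hopen hb, rfl⟩
      refine le_trans ?_ (le_csSup hSbdd hmem)
      apply Real.log_le_log (by positivity)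
      apply add_le_add_right
      apply Real.rpow_le_rpow (by positivity) ?_ (by positivity)
      rw [crossRatio_coe_coe hax hyb, crossRatio_coe_coe hxb hay, norm_sub_rev b a]
      rw [norm_sub_rev y x] at hineq
      rw [show ‖y - b‖ * ‖x - a‖ = ‖x - a‖ * ‖y - b‖ from mul_comm _ _,
        show ‖y - a‖ * ‖x - b‖ = ‖x - b‖ * ‖y - a‖ from mul_comm _ _] at hineq
      linarith
  · -- unbounded case: use ∞
    have hmem : Real.log (1 + (crossRatio (x : OnePoint (En n)) (a : OnePoint (En n))
        (y : OnePoint (En n)) ∞ ^ p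
        + crossRatio (x : OnePoint (En n)) ∞ (y : OnePoint (En n))
        (a : OnePoint (En n)) ^ p) ^ (1 / p)) ∈ S :=
      ⟨(a : OnePoint (En n)), coe_mem_frontier hopen ha,
       ∞, infty_mem_frontier hopen hbdd, rfl⟩
    refine le_trans (le_of_eq ?_) (le_csSup hSbdd hmem)
    rw [crossRatio_coe_infty hax, crossRatio_infty_coe hay,
      Real.div_rpow (norm_nonneg _) (norm_nonneg _),
      Real.div_rpow (norm_nonneg _) (norm_nonneg _)]

end
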